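/- Let Φ : [0, b-a] → ℝ≥0 be nonnegative, convex with Φ(0) = 0, let a₁,...,aₙ satisfy the Jensen–Steffensen conditions, let x₁ ≤ ... ≤ xₙ in [a,b], and let c satisfy x_k ≤ c ≤ x_{k+1} for some 1 ≤ k ≤ n-1. Then ∑_{i=1}^n aᵢ Φ(|xᵢ - c|) ≥ 0. -/
import Mathlib

private lemma fwd_aux (w : ℕ → ℝ) :
    ∀ m (f : ℕ → ℝ), (∀ j ≤ m, 0 ≤ ∑ i ∈ Finset.range j, w i) →
    (∀ i j, i ≤ j → j < m → f j ≤ f i) →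
    (∀ i < m, 0 ≤ f i) →
    0 ≤ ∑ i ∈ Finset.range m, w i * f i := by
  intro m
  induction m with
  | zero => simp
  | succ m ih =>
    intro f hS hanti hnn
    have key : ∑ i ∈ Finset.range (m+1), w i * f i
        = (∑ i ∈ Finset.range m, w i * (f i - f m))
          + f m * ∑ i ∈ Finset.range (m+1), w i := by
      rw [Finset.sum_range_succ (fun i => w i * f i), Finset.sum_range_succ w m]
      simp only [mul_sub]
      rw [Finset.sum_sub_distrib, ← Finset.sum_mul]
      ring
    rw [key]
    apply add_nonneg
    · exact ih (fun i => f i - f m) (fun j hj => hS j (le_trans hj (Nat.le_succ m)))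
        (fun i j hij hj =>
          sub_le_sub_right (hanti i j hij (Nat.lt_succ_of_lt hj)) _)
        (fun i hi => sub_nonneg.2 (hanti i m (le_of_lt hi) (Nat.lt_succ_self m)))
    · exact mul_nonneg (hnn m (Nat.lt_succ_self m)) (hS (m+1) le_rfl)

private lemma bwd_aux (w : ℕ → ℝ) (n : ℕ) :
    ∀ d (f : ℕ → ℝ) s, s + d = n →
    (∀ j, s ≤ j → j ≤ n → 0 ≤ ∑ i ∈ Finset.Ico j n, w i) →
    (∀ i j, s ≤ i → i ≤ j → j < n → f i ≤ f j) →
    (∀ i, s ≤ i → i < n → 0 ≤ f i) →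
    0 ≤ ∑ i ∈ Finset.Ico s n, w i * f i := by
  intro d
  induction d with
  | zero =>
    intro f s hs _ _ _
    simp [show s = n from by omega]
  | succ d ih =>
    intro f s hs hT hmono hnn
    have hsn : s < n := by omega
    have key : ∑ i ∈ Finset.Ico s n, w i * f i
        = (∑ i ∈ Finset.Ico (s+1) n, w i * (f i - f s))
          + f s * ∑ i ∈ Finset.Ico s n, w i := by
      rw [Finset.sum_eq_sum_Ico_succ_bot hsn, Finset.sum_eq_sum_Ico_succ_bot hsn w]
      simp only [mul_sub]
      rw [Finset.sum_sub_distrib, ← Finset.sum_mul]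
      ring
    rw [key]
    apply add_nonneg
    · exact ih (fun i => f i - f s) (s+1) (by omega)
        (fun j hj hjn => hT j (by omega) hjn)
        (fun i j hi hij hj => sub_le_sub_right (hmono i j (by omega) hij hj) _)
        (fun i hi hin => sub_nonneg.2 (hmono s i le_rfl (by omega) hin))
    · exact mul_nonneg (hnn s le_rfl hsn) (hT s le_rfl (le_of_lt hsn))

/-- nonnegativity of the Jensen–Steffensen weighted sum of a
nonnegative convex Φ with Φ(0)=0. -/
theorem stmt5 (a b : ℝ) (hab : a < b) (Φ : ℝ → ℝ)
    (hΦnn : ∀ x ∈ Set.Icc 0 (b - a), 0 ≤ Φ x)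
    (hΦconv : ConvexOn ℝ (Set.Icc 0 (b - a)) Φ)
    (hΦ0 : Φ 0 = 0)
    (n : ℕ) (hn : 0 < n) (w x : ℕ → ℝ) (A : ℝ)
    (hA : A = ∑ i ∈ Finset.range n, w i) (hApos : 0 < A)
    (hJS : ∀ j ≤ n, 0 ≤ ∑ i ∈ Finset.range j, w i ∧ ∑ i ∈ Finset.range j, w i ≤ A)
    (hx : ∀ i < n, x i ∈ Set.Icc a b)
    (hmono : ∀ i j, i ≤ j → j < n → x i ≤ x j)
    (c : ℝ) (k : ℕ) (hk : k + 1 < n) (hc1 : x k ≤ c) (hc2 : c ≤ x (k + 1)) :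
    0 ≤ ∑ i ∈ Finset.range n, w i * Φ |x i - c| := by
  have hba : (0:ℝ) ≤ b - a := by linarith
  -- Φ is monotone on [0, b-a]
  have hΦmono : ∀ s t : ℝ, 0 ≤ s → s ≤ t → t ≤ b - a → Φ s ≤ Φ t := by
    intro s t hs hst htb
    rcases eq_or_lt_of_le (hs.trans hst) with ht0 | ht0
    · have hs0 : s = 0 := le_antisymm (hst.trans ht0.ge) hs
      rw [hs0, ← ht0]
    · have hl0 : (0:ℝ) ≤ s / t := div_nonneg hs ht0.le
      have hl1 : s / t ≤ 1 := div_le_one_of_le₀ hst ht0.le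
      have h0mem : (0:ℝ) ∈ Set.Icc (0:ℝ) (b - a) := ⟨le_refl _, hba⟩
      have htmem : t ∈ Set.Icc (0:ℝ) (b - a) := ⟨ht0.le, htb⟩
      have := hΦconv.2 h0mem htmem (by linarith : (0:ℝ) ≤ 1 - s / t) hl0
        (by ring)
      simp only [smul_eq_mul, mul_zero, hΦ0, zero_add, mul_zero] at this
      have hst' : s / t * t = s := div_mul_cancel₀ s (ne_of_gt ht0)
      rw [hst'] at this
      have hΦt : 0 ≤ Φ t := hΦnn t htmem
      nlinarith
  have hca : a ≤ c := le_trans (hx k (by omega)).1 hc1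
  have hcb : c ≤ b := le_trans hc2 (hx (k+1) hk).2
  -- split the sum
  rw [← Finset.sum_range_add_sum_Ico (fun i => w i * Φ |x i - c|) hk.le]
  apply add_nonneg
  · -- forward part: indices 0..k, x i ≤ c
    apply fwd_aux w (k+1) (fun i => Φ |x i - c|)
      (fun j hj => (hJS j (by omega)).1)
    · intro i j hij hj
      have hj' : j ≤ k := by omega
      have hxic : x i ≤ c := le_trans (hmono i k (by omega) (by omega)) hc1
      have hxjc : x j ≤ c := le_trans (hmono j k hj' (by omega)) hc1
      have hxi : |x i - c| = c - x i := by
        rw [abs_of_nonpos (by linarith)]; ring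
      have hxj : |x j - c| = c - x j := by
        rw [abs_of_nonpos (by linarith)]; ring
      rw [hxi, hxj]
      have hxij : x i ≤ x j := hmono i j hij (by omega)
      have hia : a ≤ x i := (hx i (by omega)).1
      exact hΦmono _ _ (by linarith) (by linarith) (by linarith)
    · intro i hi
      have hia : a ≤ x i := (hx i (by omega)).1
      have hib : x i ≤ b := (hx i (by omega)).2
      exact hΦnn _ ⟨abs_nonneg _, abs_le.2 ⟨by linarith, by linarith⟩⟩
  · -- backward part: indices k+1..n-1, c ≤ x i
    apply bwd_aux w n (n - (k+1)) (fun i => Φ |x i - c|) (k+1) (by omega)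
    · intro j hj hjn
      rw [Finset.sum_Ico_eq_sub w hjn]
      have := (hJS j hjn).2
      linarith [hA ▸ this]
    · intro i j hi hij hj
      have hcxi : c ≤ x i := le_trans hc2 (hmono (k+1) i hi (by omega))
      have hcxj : c ≤ x j := le_trans hc2 (hmono (k+1) j (by omega) hj)
      have hxi : |x i - c| = x i - c := abs_of_nonneg (by linarith)
      have hxj : |x j - c| = x j - c := abs_of_nonneg (by linarith)
      rw [hxi, hxj]
      have hxij : x i ≤ x j := hmono i j hij hj
      have hjb : x j ≤ b := (hx j hj).2
      exact hΦmono _ _ (by linarith) (by linarith) (by linarith)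
    · intro i hi hin
      have hia : a ≤ x i := (hx i hin).1
      have hib : x i ≤ b := (hx i hin).2
      exact hΦnn _ ⟨abs_nonneg _, abs_le.2 ⟨by linarith, by linarith⟩⟩
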